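/- Let h = ℓ₀ + ℓ₁² + ⋯ + ℓₘ² for some linear ℓ₀,…,ℓₘ ∈ ℝ⟨x⟩ and let α, β > 0. If D₁(α − h) ⊆ D₁(β + h), then β + h is a sum of hermitian squares in ℝ⟨x⟩. -/

import Mathlib

open scoped BigOperators

/-- `ℓ ∈ ℝ⟨x⟩` is linear if it is an `ℝ`-linear combination of the variables. -/
def IsLin (d : ℕ) (ℓ : FreeAlgebra ℝ (Fin d)) : Prop :=
  ∃ c : Fin d → ℝ, ℓ = ∑ i, c i • FreeAlgebra.ι ℝ i

/-- `s ∈ ℝ⟨x⟩` is a sum of hermitian squares if `s = Σⱼ gⱼ* gⱼ`. -/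
def IsSOHS (d : ℕ) (s : FreeAlgebra ℝ (Fin d)) : Prop :=
  ∃ (m : ℕ) (g : Fin m → FreeAlgebra ℝ (Fin d)), s = ∑ j, star (g j) * (g j)

/-- `D₁(g)`: the closure of the connected component of the origin of
`{τ ∈ ℝ^d : g(τ) > 0}` (identifying symmetric `1 × 1` matrices with `ℝ`). -/
def D1 (d : ℕ) (g : FreeAlgebra ℝ (Fin d)) : Set (Fin d → ℝ) :=
  closure (connectedComponentIn
    {τ : Fin d → ℝ | 0 < (FreeAlgebra.lift ℝ τ) g} 0)

lemma lift_lin_eval (d : ℕ) (c : Fin d → ℝ) (τ : Fin d → ℝ) :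
    FreeAlgebra.lift ℝ τ (∑ i, c i • FreeAlgebra.ι ℝ i) = ∑ i, c i * τ i := by
  simp [map_sum, FreeAlgebra.lift_ι_apply]

lemma star_lin (d : ℕ) (c : Fin d → ℝ) :
    star (∑ i, c i • FreeAlgebra.ι ℝ i) = ∑ i, c i • FreeAlgebra.ι ℝ i := by
  rw [star_sum]
  refine Finset.sum_congr rfl fun i _ => ?_
  rw [Algebra.smul_def, star_mul, FreeAlgebra.star_ι, FreeAlgebra.star_algebraMap,
    ← Algebra.commutes]

/-- For `h = ℓ₀ + ℓ₁² + ⋯ + ℓₘ²` with linear `ℓᵢ` and `α, β > 0`: if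
`D₁(α - h) ⊆ D₁(β + h)`, then `β + h` is a sum of hermitian squares. -/
theorem sohs_of_D1_subset (d : ℕ) (hd : 0 < d) (m : ℕ)
    (ℓ₀ : FreeAlgebra ℝ (Fin d)) (ℓ : Fin m → FreeAlgebra ℝ (Fin d))
    (hℓ₀ : IsLin d ℓ₀) (hℓ : ∀ i, IsLin d (ℓ i))
    (h : FreeAlgebra ℝ (Fin d)) (hh : h = ℓ₀ + ∑ i, (ℓ i) ^ 2)
    (α β : ℝ) (hα : 0 < α) (hβ : 0 < β)
    (hsub : D1 d (algebraMap ℝ (FreeAlgebra ℝ (Fin d)) α - h) ⊆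
            D1 d (algebraMap ℝ (FreeAlgebra ℝ (Fin d)) β + h)) :
    IsSOHS d (algebraMap ℝ (FreeAlgebra ℝ (Fin d)) β + h) := by
  classical
  obtain ⟨c₀, hc₀⟩ := hℓ₀
  choose C hC using hℓ
  set f : (Fin d → ℝ) → ℝ :=
    fun τ => (∑ i, c₀ i * τ i) + ∑ j, (∑ i, C j i * τ i) ^ 2 with hf
  have hev : ∀ τ, FreeAlgebra.lift ℝ τ h = f τ := by
    intro τ
    rw [hh, map_add, map_sum, hc₀, lift_lin_eval]
    congr 1
    refine Finset.sum_congr rfl fun j _ => ?_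
    rw [map_pow, hC j, lift_lin_eval]
  have hcontf : Continuous f := by fun_prop
  -- the key analytic bound
  have hbound : ∀ τ₀ : Fin d → ℝ,
      (∀ s : ℝ, s ∈ Set.Icc (0:ℝ) 1 → f (s • τ₀) < α) → -β ≤ f τ₀ := by
    intro τ₀ hpath
    set S : Set (Fin d → ℝ) :=
      {τ | 0 < FreeAlgebra.lift ℝ τ (algebraMap ℝ (FreeAlgebra ℝ (Fin d)) α - h)} with hS
    have hSf : ∀ τ, τ ∈ S ↔ f τ < α := by
      intro τ
      simp [hS, map_sub, AlgHom.commutes, hev, sub_pos]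
    have hsegconn : IsPreconnected ((fun s : ℝ => s • τ₀) '' Set.Icc 0 1) :=
      isPreconnected_Icc.image _ (by fun_prop : Continuous fun s : ℝ => s • τ₀).continuousOn
    have hsegsub : (fun s : ℝ => s • τ₀) '' Set.Icc 0 1 ⊆ S := by
      rintro _ ⟨s, hs, rfl⟩
      exact (hSf _).2 (hpath s hs)
    have h0 : (0 : Fin d → ℝ) ∈ (fun s : ℝ => s • τ₀) '' Set.Icc 0 1 :=
      ⟨0, ⟨le_refl 0, zero_le_one⟩, by simp⟩
    have hτ₀S : τ₀ ∈ connectedComponentIn S 0 :=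
      hsegconn.subset_connectedComponentIn h0 hsegsub ⟨1, ⟨zero_le_one, le_refl 1⟩, by simp⟩
    have h1 : τ₀ ∈ D1 d (algebraMap ℝ (FreeAlgebra ℝ (Fin d)) α - h) := subset_closure hτ₀S
    have h3 : D1 d (algebraMap ℝ (FreeAlgebra ℝ (Fin d)) β + h) ⊆ {τ | 0 ≤ β + f τ} := by
      apply closure_minimal
      · refine (connectedComponentIn_subset _ _).trans ?_
        intro τ hτ
        rw [Set.mem_setOf_eq, map_add, AlgHom.commutes, hev] at hτ
        exact le_of_lt hτ
      · exact isClosed_le continuous_const (by fun_prop)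
    have h4 := h3 (hsub h1)
    simp only [Set.mem_setOf_eq] at h4
    linarith
  -- linear algebra: orthogonal decomposition
  let Cv : Fin m → EuclideanSpace ℝ (Fin d) := fun j => WithLp.toLp 2 (C j)
  let A : EuclideanSpace ℝ (Fin d) →ₗ[ℝ] EuclideanSpace ℝ (Fin d) :=
    { toFun := fun w => ∑ j, (∑ k, C j k * w k) • Cv j
      map_add' := by
        intro x y
        simp [PiLp.add_apply, mul_add, Finset.sum_add_distrib, add_smul]
      map_smul' := by
        intro r x
        simp [PiLp.smul_apply, smul_eq_mul, Finset.mul_sum, Finset.smul_sum, smul_smul,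
          mul_comm, mul_left_comm] }
  set K : Submodule ℝ (EuclideanSpace ℝ (Fin d)) := LinearMap.range A with hK
  obtain ⟨p, hp, w, hw, hc⟩ := K.exists_add_mem_mem_orthogonal (WithLp.toLp 2 c₀ : EuclideanSpace ℝ (Fin d))
  -- all ⟨C j, w⟩ vanish
  have hAww : (inner ℝ (A w) (w : EuclideanSpace ℝ (Fin d)) : ℝ) = 0 :=
    Submodule.inner_right_of_mem_orthogonal (LinearMap.mem_range_self A w) hw
  have hinner : ∀ x y : EuclideanSpace ℝ (Fin d), (inner ℝ x y : ℝ) = ∑ i, x i * y i := by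
    intro x y
    simp [PiLp.inner_apply, RCLike.inner_apply, conj_trivial, mul_comm]
  have hAw' : ∑ j, (∑ k, C j k * w k) ^ 2 = 0 := by
    have : (inner ℝ (A w) (w : EuclideanSpace ℝ (Fin d)) : ℝ)
        = ∑ j, (∑ k, C j k * w k) ^ 2 := by
      show (inner ℝ (∑ j, (∑ k, C j k * w k) • Cv j) (w : EuclideanSpace ℝ (Fin d)) : ℝ) = _
      rw [sum_inner]
      refine Finset.sum_congr rfl fun j _ => ?_
      rw [real_inner_smul_left, hinner, sq]
    rw [← this, hAww]
  have hCw : ∀ j, ∑ k, C j k * w k = 0 := by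
    intro j
    have := (Finset.sum_eq_zero_iff_of_nonneg (fun j _ => sq_nonneg _)).1 hAw' j
      (Finset.mem_univ j)
    exact pow_eq_zero_iff (n := 2) (by norm_num) |>.1 this
  have hpw : (inner ℝ p (w : EuclideanSpace ℝ (Fin d)) : ℝ) = 0 :=
    Submodule.inner_right_of_mem_orthogonal hp hw
  -- value of c₀ · w
  have hc₀w : ∑ i, c₀ i * w i = ∑ i, w i * w i := by
    have hci : ∀ i, c₀ i = p i + w i := by
      intro i
      have : (WithLp.toLp 2 c₀ : EuclideanSpace ℝ (Fin d)) i = (p + w : EuclideanSpace ℝ (Fin d)) i := by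
        rw [← hc]
      simpa [PiLp.add_apply] using this
    have hpw' : ∑ i, p i * w i = 0 := by rw [← hinner p w]; exact hpw
    calc ∑ i, c₀ i * w i = ∑ i, (p i * w i + w i * w i) := by
          refine Finset.sum_congr rfl fun i _ => ?_
          rw [hci i, add_mul]
      _ = ∑ i, w i * w i := by rw [Finset.sum_add_distrib, hpw', zero_add]
  -- w = 0
  have hwzero : ∀ i, w i = 0 := by
    by_contra hne
    push_neg at hne
    obtain ⟨i0, hi0⟩ := hne
    set W : ℝ := ∑ i, w i * w i with hW
    have hWpos : 0 < W :=
      Finset.sum_pos' (fun i _ => mul_self_nonneg _)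
        ⟨i0, Finset.mem_univ i0, mul_self_pos.mpr hi0⟩
    set t : ℝ := (β + 1) / W with ht
    have htpos : 0 < t := div_pos (by linarith) hWpos
    have hfval : ∀ r : ℝ, f (r • (w : Fin d → ℝ)) = r * W := by
      intro r
      rw [hf]
      simp only [Pi.smul_apply, PiLp.smul_apply, smul_eq_mul]
      have h1 : ∀ j, ∑ i, C j i * (r * w i) = r * ∑ i, C j i * w i := by
        intro j; rw [Finset.mul_sum]; exact Finset.sum_congr rfl fun i _ => by ring
      have h2 : ∑ i, c₀ i * (r * w i) = r * ∑ i, c₀ i * w i := by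
        rw [Finset.mul_sum]; exact Finset.sum_congr rfl fun i _ => by ring
      rw [h2, hc₀w]
      have h3 : ∑ j, (∑ i, C j i * (r * w i)) ^ 2 = 0 := by
        refine Finset.sum_eq_zero fun j _ => ?_
        rw [h1, hCw j, mul_zero]
        norm_num
      rw [h3, add_zero]
    have hb := hbound ((-t) • (w : Fin d → ℝ)) ?_
    · rw [hfval (-t)] at hb
      have htW : t * W = β + 1 := div_mul_cancel₀ _ (ne_of_gt hWpos)
      nlinarith [hb, htW]
    · intro s hs
      rw [smul_smul, hfval]
      nlinarith [mul_nonneg (mul_nonneg hs.1 htpos.le) hWpos.le]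
  have hwzero' : (w : EuclideanSpace ℝ (Fin d)) = 0 := by
    ext i; simpa using hwzero i
  have hc₀K : (WithLp.toLp 2 c₀ : EuclideanSpace ℝ (Fin d)) ∈ K := by
    rw [hc, hwzero', add_zero]; exact hp
  obtain ⟨u, hu⟩ := hc₀K
  set lam : Fin m → ℝ := fun j => ∑ k, C j k * u k with hlam
  have hc₀i : ∀ i, c₀ i = ∑ j, lam j * C j i := by
    intro i
    have : (A u) i = c₀ i := congrArg (fun v => v i) hu
    rw [← this]
    show (∑ j, (∑ k, C j k * u k) • Cv j) i = _
    have hsumap : (∑ j, (∑ k, C j k * u k) • Cv j) i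
        = ∑ j, ((∑ k, C j k * u k) • Cv j) i :=
      by rw [WithLp.ofLp_sum]; exact Finset.sum_apply i Finset.univ _
    rw [hsumap]
    exact Finset.sum_congr rfl fun j _ => rfl
  set Λ : ℝ := ∑ j, lam j ^ 2 with hΛ
  have hΛnn : 0 ≤ Λ := Finset.sum_nonneg fun j _ => sq_nonneg _
  have hc₀u : ∑ i, c₀ i * u i = Λ := by
    calc ∑ i, c₀ i * u i = ∑ i, ∑ j, lam j * C j i * u i := by
          refine Finset.sum_congr rfl fun i _ => ?_
          rw [hc₀i i, Finset.sum_mul]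
      _ = ∑ j, ∑ i, lam j * C j i * u i := Finset.sum_comm
      _ = Λ := by
          rw [hΛ]
          refine Finset.sum_congr rfl fun j _ => ?_
          rw [sq, hlam]
          simp only []
          rw [Finset.mul_sum]
          exact Finset.sum_congr rfl fun i _ => by ring
  -- value of f along the segment towards -u/2
  have hfu : ∀ r : ℝ, f (r • u) = r * Λ + r ^ 2 * Λ := by
    intro r
    rw [hf]
    simp only [Pi.smul_apply, PiLp.smul_apply, smul_eq_mul]
    have h2 : ∑ i, c₀ i * (r * u i) = r * Λ := by
      rw [← hc₀u, Finset.mul_sum]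
      exact Finset.sum_congr rfl fun i _ => by ring
    have h3 : ∑ j, (∑ i, C j i * (r * u i)) ^ 2 = r ^ 2 * Λ := by
      rw [hΛ, Finset.mul_sum]
      refine Finset.sum_congr rfl fun j _ => ?_
      have : ∑ i, C j i * (r * u i) = r * lam j := by
        rw [hlam, Finset.mul_sum]
        exact Finset.sum_congr rfl fun i _ => by ring
      rw [this]; ring
    rw [h2, h3]
  have hΛβ : Λ ≤ 4 * β := by
    have hb := hbound ((-(1/2) : ℝ) • u) ?_
    · rw [hfu] at hb
      nlinarith
    · intro s hs
      rw [smul_smul, hfu]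
      nlinarith [mul_nonneg (mul_nonneg hs.1 (by linarith [hs.2] : (0:ℝ) ≤ 1 - s)) hΛnn,
        mul_nonneg hs.1 hΛnn]
  -- construct the SOHS certificate
  have hsqrt : Real.sqrt (β - Λ / 4) * Real.sqrt (β - Λ / 4) = β - Λ / 4 :=
    Real.mul_self_sqrt (by linarith)
  have hℓ₀sum : ℓ₀ = ∑ j, lam j • ℓ j := by
    rw [hc₀]
    calc ∑ i, c₀ i • FreeAlgebra.ι ℝ i
        = ∑ i, ∑ j, (lam j * C j i) • FreeAlgebra.ι ℝ i := by
          refine Finset.sum_congr rfl fun i _ => ?_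
          rw [hc₀i i, Finset.sum_smul]
      _ = ∑ j, ∑ i, (lam j * C j i) • FreeAlgebra.ι ℝ i := Finset.sum_comm
      _ = ∑ j, lam j • ℓ j := by
          refine Finset.sum_congr rfl fun j _ => ?_
          rw [hC j, Finset.smul_sum]
          exact Finset.sum_congr rfl fun i _ => (smul_smul _ _ _).symm
  have hstarℓ : ∀ j, star (ℓ j) = ℓ j := by
    intro j; rw [hC j]; exact star_lin d (C j)
  refine ⟨m + 1, Fin.snoc (fun j => algebraMap ℝ (FreeAlgebra ℝ (Fin d)) (lam j / 2) + ℓ j)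
    (algebraMap ℝ (FreeAlgebra ℝ (Fin d)) (Real.sqrt (β - Λ / 4))), ?_⟩
  rw [Fin.sum_univ_castSucc]
  simp only [Fin.snoc_castSucc, Fin.snoc_last]
  have hsq : ∀ j : Fin m,
      star (algebraMap ℝ (FreeAlgebra ℝ (Fin d)) (lam j / 2) + ℓ j) *
        (algebraMap ℝ (FreeAlgebra ℝ (Fin d)) (lam j / 2) + ℓ j)
      = algebraMap ℝ (FreeAlgebra ℝ (Fin d)) (lam j / 2 * (lam j / 2)) + lam j • ℓ j
        + (ℓ j) ^ 2 := by
    intro j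
    rw [star_add, hstarℓ j, FreeAlgebra.star_algebraMap, add_mul, mul_add, mul_add, ← map_mul]
    have e1 : algebraMap ℝ (FreeAlgebra ℝ (Fin d)) (lam j / 2) * ℓ j = (lam j / 2) • ℓ j :=
      (Algebra.smul_def _ _).symm
    have e2 : ℓ j * algebraMap ℝ (FreeAlgebra ℝ (Fin d)) (lam j / 2) = (lam j / 2) • ℓ j := by
      rw [← Algebra.commutes]; exact (Algebra.smul_def _ _).symm
    have e3 : (lam j / 2) • ℓ j + (lam j / 2) • ℓ j = lam j • ℓ j := by
      rw [← add_smul]; norm_num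
    rw [e1, e2, sq, ← e3]
    abel
  have hlast : star (algebraMap ℝ (FreeAlgebra ℝ (Fin d)) (Real.sqrt (β - Λ / 4))) *
      algebraMap ℝ (FreeAlgebra ℝ (Fin d)) (Real.sqrt (β - Λ / 4))
      = algebraMap ℝ (FreeAlgebra ℝ (Fin d)) (β - Λ / 4) := by
    rw [FreeAlgebra.star_algebraMap, ← map_mul, hsqrt]
  rw [hlast]
  have : ∑ j : Fin m, star (algebraMap ℝ (FreeAlgebra ℝ (Fin d)) (lam j / 2) + ℓ j) *
        (algebraMap ℝ (FreeAlgebra ℝ (Fin d)) (lam j / 2) + ℓ j)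
      = algebraMap ℝ (FreeAlgebra ℝ (Fin d)) (Λ / 4) + ℓ₀ + ∑ j, (ℓ j) ^ 2 := by
    rw [Finset.sum_congr rfl fun j _ => hsq j]
    rw [Finset.sum_add_distrib, Finset.sum_add_distrib, ← map_sum, ← hℓ₀sum]
    congr 2
    rw [hΛ, Finset.sum_div]
    exact congrArg _ (Finset.sum_congr rfl fun j _ => by ring)
  rw [this, hh]
  rw [← sub_eq_zero]
  have : algebraMap ℝ (FreeAlgebra ℝ (Fin d)) β
      = algebraMap ℝ (FreeAlgebra ℝ (Fin d)) (Λ / 4)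
        + algebraMap ℝ (FreeAlgebra ℝ (Fin d)) (β - Λ / 4) := by
    rw [← map_add]; norm_num
  rw [this]
  abel
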